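/- Let x_1, ..., x_n be distinct points in ℝ^d such that for each k = 2, ..., n, x_k ∉ conv(x_1, ..., x_{k-1}). Then there exists a continuous quasi-convex function f : ℝ^d → ℝ with f(x_1) < f(x_2) < ... < f(x_n). In fact f can be taken convex. -/

import Mathlib

open Metric Set Finset

/-- The distance to a nonempty convex set is a convex function. -/
lemma convexOn_infDist_aux {E : Type*} [NormedAddCommGroup E] [NormedSpace ℝ E]
    {C : Set E} (hC : Convex ℝ C) (hne : C.Nonempty) :
    ConvexOn ℝ Set.univ (fun y => Metric.infDist y C) := by
  refine ⟨convex_univ, fun p _ q _ a b ha hb hab => ?_⟩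
  refine le_of_forall_pos_le_add (fun ε hε => ?_)
  obtain ⟨u, hu, hdu⟩ := (Metric.infDist_lt_iff hne).1
    (lt_add_of_pos_right (Metric.infDist p C) hε)
  obtain ⟨v, hv, hdv⟩ := (Metric.infDist_lt_iff hne).1
    (lt_add_of_pos_right (Metric.infDist q C) hε)
  have hmem : a • u + b • v ∈ C := hC hu hv ha hb hab
  calc Metric.infDist (a • p + b • q) C ≤ dist (a • p + b • q) (a • u + b • v) :=
        Metric.infDist_le_dist_of_mem hmem
    _ ≤ dist (a • p) (a • u) + dist (b • q) (b • v) := dist_add_add_le _ _ _ _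
    _ = a * dist p u + b * dist q v := by
        rw [dist_smul₀, dist_smul₀, Real.norm_eq_abs, Real.norm_eq_abs,
          abs_of_nonneg ha, abs_of_nonneg hb]
    _ ≤ a * (Metric.infDist p C + ε) + b * (Metric.infDist q C + ε) := by
        gcongr
    _ = a • Metric.infDist p C + b • Metric.infDist q C + (a + b) * ε := by
        simp only [smul_eq_mul]; ring
    _ = a • Metric.infDist p C + b • Metric.infDist q C + ε := by rw [hab, one_mul]

set_option maxHeartbeats 1000000 in
/-- If each point lies outside the convex hull of its predecessors, there exists a
continuous (quasi-)convex function strictly increasing along the points. -/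
theorem stmt1 {d n : ℕ} (x : Fin n → EuclideanSpace ℝ (Fin d))
    (hx : Function.Injective x)
    (h : ∀ k : Fin n, x k ∉ convexHull ℝ (x '' {j | j < k})) :
    ∃ f : EuclideanSpace ℝ (Fin d) → ℝ, Continuous f ∧
      ConvexOn ℝ Set.univ f ∧ (∀ ℓ : ℝ, Convex ℝ {y | f y < ℓ}) ∧
      ∀ i j : Fin n, i < j → f (x i) < f (x j) := by
  classical
  set C : Fin n → Set (EuclideanSpace ℝ (Fin d)) :=
    fun k => convexHull ℝ (x '' {j | j ≤ k}) with hCdef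
  set g : Fin n → EuclideanSpace ℝ (Fin d) → ℝ :=
    fun k y => Metric.infDist y (C k) with hgdef
  have hCconv : ∀ k, Convex ℝ (C k) := fun k => convex_convexHull ℝ _
  have hCne : ∀ k, (C k).Nonempty := fun k =>
    ⟨x k, subset_convexHull ℝ _ ⟨k, by simp, rfl⟩⟩
  have hCclosed : ∀ k, IsClosed (C k) := fun k =>
    (((Set.toFinite _).image x).isCompact_convexHull ℝ).isClosed
  have hg0 : ∀ i k : Fin n, i ≤ k → g k (x i) = 0 := fun i k hik =>
    Metric.infDist_zero_of_mem (subset_convexHull ℝ _ ⟨i, by simpa using hik, rfl⟩)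
  have hgpos : ∀ k j : Fin n, k < j → 0 < g k (x j) := by
    intro k j hkj
    have hnot : x j ∉ C k := by
      intro hmem
      exact h j (convexHull_mono (Set.image_mono fun j' hj' =>
        lt_of_le_of_lt hj' hkj) hmem)
    exact ((hCclosed k).notMem_iff_infDist_pos (hCne k)).1 hnot
  set P : Finset (Fin n × Fin n) := Finset.univ.filter (fun p => p.1 < p.2) with hPdef
  by_cases hP : P.Nonempty
  · have hexists : ∃ ε D : ℝ, 0 < ε ∧ 0 ≤ D ∧ (∀ p ∈ P, ε ≤ g p.1 (x p.2)) ∧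
        (∀ p ∈ P, g p.1 (x p.2) ≤ D) := by
      refine ⟨P.inf' hP (fun p => g p.1 (x p.2)), P.sup' hP (fun p => g p.1 (x p.2)),
        ?_, ?_, fun p hp => Finset.inf'_le _ hp, fun p hp => Finset.le_sup' (fun q : Fin n × Fin n => g q.1 (x q.2)) hp⟩
      · rw [Finset.lt_inf'_iff]
        intro p hp
        exact hgpos p.1 p.2 (Finset.mem_filter.1 hp).2
      · obtain ⟨p, hp⟩ := hP
        exact le_trans Metric.infDist_nonneg (Finset.le_sup' (fun q : Fin n × Fin n => g q.1 (x q.2)) hp)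
    obtain ⟨ε, D, hε, hD, hεle, hDle⟩ := hexists
    have hMex : ∃ M : ℝ, 0 < M ∧ ε + D ≤ M * ε := by
      refine ⟨D / ε + 2, by have := div_nonneg hD hε.le; linarith, ?_⟩
      have : (D / ε + 2) * ε = D + 2 * ε := by
        field_simp
      rw [this]; linarith
    obtain ⟨M, hM0, hMε⟩ := hMex
    -- key geometric estimate
    have key : ∀ m : ℕ, (∑ k ∈ Finset.range m, M ^ k * D) < M ^ m * ε := by
      intro m
      induction m with
      | zero => simpa using hε
      | succ m ih =>
          rw [Finset.sum_range_succ]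
          have h1 : (∑ k ∈ Finset.range m, M ^ k * D) + M ^ m * D
              < M ^ m * ε + M ^ m * D := by linarith
          refine lt_of_lt_of_le h1 ?_
          have h2 : M ^ m * ε + M ^ m * D = M ^ m * (ε + D) := by ring
          have h3 : M ^ (m + 1) * ε = M ^ m * (M * ε) := by ring
          rw [h2, h3]
          exact mul_le_mul_of_nonneg_left hMε (pow_nonneg hM0.le m)
    refine ⟨fun y => ∑ k : Fin n, M ^ (k : ℕ) * g k y, ?_, ?_, ?_, ?_⟩
    · exact continuous_finset_sum _ fun k _ =>
        continuous_const.mul (Metric.continuous_infDist_pt _)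
    · have : ∀ k : Fin n, ConvexOn ℝ Set.univ (fun y => M ^ (k : ℕ) * g k y) := by
        intro k
        simpa [smul_eq_mul] using
          (convexOn_infDist_aux (hCconv k) (hCne k)).smul (pow_nonneg hM0.le (k:ℕ))
      classical
      induction (Finset.univ : Finset (Fin n)) using Finset.induction with
      | empty => simpa using convexOn_const (0:ℝ) convex_univ
      | insert _ _ hnot ih =>
          simp only [Finset.sum_insert hnot]
          exact (this _).add ih
    · intro ℓ
      have hconv : ConvexOn ℝ Set.univ (fun y => ∑ k : Fin n, M ^ (k : ℕ) * g k y) := by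
        have : ∀ k : Fin n, ConvexOn ℝ Set.univ (fun y => M ^ (k : ℕ) * g k y) := by
          intro k
          simpa [smul_eq_mul] using
            (convexOn_infDist_aux (hCconv k) (hCne k)).smul
              (pow_nonneg hM0.le (k:ℕ))
        classical
        induction (Finset.univ : Finset (Fin n)) using Finset.induction with
        | empty => simpa using convexOn_const (0:ℝ) convex_univ
        | insert _ _ hnot ih =>
            simp only [Finset.sum_insert hnot]
            exact (this _).add ih
      simpa using hconv.convex_lt ℓ
    · intro i j hij
      show (∑ k : Fin n, M ^ (k : ℕ) * g k (x i)) < ∑ k : Fin n, M ^ (k : ℕ) * g k (x j)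
      -- upper bound for f (x i)
      have hub : (∑ k : Fin n, M ^ (k : ℕ) * g k (x i))
          ≤ ∑ k ∈ Finset.range (i : ℕ), M ^ k * D := by
        have step1 : (∑ k : Fin n, M ^ (k : ℕ) * g k (x i))
            ≤ ∑ k : Fin n, (if (k : ℕ) < (i : ℕ) then M ^ (k : ℕ) * D else 0) := by
          refine Finset.sum_le_sum fun k _ => ?_
          by_cases hk : (k : ℕ) < (i : ℕ)
          · rw [if_pos hk]
            have hki : k < i := Fin.lt_def.mpr hk
            have hkP : (k, i) ∈ P := by
              rw [hPdef, Finset.mem_filter]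
              exact ⟨Finset.mem_univ _, hki⟩
            have hgD : g k (x i) ≤ D := hDle (k, i) hkP
            exact mul_le_mul_of_nonneg_left hgD (pow_nonneg hM0.le _)
          · rw [if_neg hk, hg0 i k (not_lt.1 hk)]
            simp
        have step2 : (∑ k : Fin n, (if (k : ℕ) < (i : ℕ) then M ^ (k : ℕ) * D else 0))
            = ∑ k ∈ Finset.range n, (if k < (i : ℕ) then M ^ k * D else 0) :=
          Fin.sum_univ_eq_sum_range (fun k => if k < (i : ℕ) then M ^ k * D else 0) n
        have step3 : (∑ k ∈ Finset.range n, (if k < (i : ℕ) then M ^ k * D else 0))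
            = ∑ k ∈ Finset.range (i : ℕ), (if k < (i : ℕ) then M ^ k * D else 0) := by
          refine (Finset.sum_subset (Finset.range_subset_range.2 i.isLt.le) ?_).symm
          intro k _ hk
          rw [if_neg (by simpa using Finset.mem_range.not.1 hk)]
        have step4 : (∑ k ∈ Finset.range (i : ℕ), (if k < (i : ℕ) then M ^ k * D else 0))
            = ∑ k ∈ Finset.range (i : ℕ), M ^ k * D :=
          Finset.sum_congr rfl fun k hk => if_pos (Finset.mem_range.1 hk)
        calc (∑ k : Fin n, M ^ (k : ℕ) * g k (x i))
            ≤ ∑ k : Fin n, (if (k : ℕ) < (i : ℕ) then M ^ (k : ℕ) * D else 0) := step1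
          _ = ∑ k ∈ Finset.range (i : ℕ), M ^ k * D := (step2.trans step3).trans step4
      -- lower bound for f (x j)
      have hij' : (i, j) ∈ P := by
        rw [hPdef, Finset.mem_filter]
        exact ⟨Finset.mem_univ _, hij⟩
      have hεle' : ε ≤ g i (x j) := hεle (i, j) hij'
      have hlb : M ^ (i : ℕ) * ε ≤ ∑ k : Fin n, M ^ (k : ℕ) * g k (x j) := by
        have h1 : M ^ (i : ℕ) * ε ≤ M ^ (i : ℕ) * g i (x j) :=
          mul_le_mul_of_nonneg_left hεle' (pow_nonneg hM0.le _)
        refine h1.trans ?_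
        refine Finset.single_le_sum (f := fun k : Fin n => M ^ (k : ℕ) * g k (x j))
          (fun k _ => mul_nonneg (pow_nonneg hM0.le _) Metric.infDist_nonneg) (Finset.mem_univ i)
      calc (∑ k : Fin n, M ^ (k : ℕ) * g k (x i))
          ≤ ∑ k ∈ Finset.range (i : ℕ), M ^ k * D := hub
        _ < M ^ (i : ℕ) * ε := key _
        _ ≤ ∑ k : Fin n, M ^ (k : ℕ) * g k (x j) := hlb
  · -- no pairs i < j: constant function works
    refine ⟨fun _ => 0, continuous_const, convexOn_const 0 convex_univ, fun ℓ => ?_, ?_⟩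
    · rcases lt_or_ge 0 ℓ with hl | hl
      · simpa [hl] using convex_univ (𝕜 := ℝ) (E := EuclideanSpace ℝ (Fin d))
      · simpa [not_lt.2 hl] using convex_empty (𝕜 := ℝ) (E := EuclideanSpace ℝ (Fin d))
    · intro i j hij
      exact absurd ⟨(i, j), Finset.mem_filter.2 ⟨Finset.mem_univ _, hij⟩⟩ hP
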